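/- Let a, b, c, x, y, z be generalized labels with a ≠ x, b ≠ y, and c ≠ z. Then at least one of the three upward triangles with (left, right, bottom) labels (x, b, c), (a, y, c), and (a, b, z) is not a valid generalized triangular puzzle piece. -/
import Mathlib


/-!
STATEMENT 2: Let a, b, c, x, y, z be generalized labels with a ≠ x, b ≠ y,
c ≠ z.  Then at least one of the three upward triangles with (left, right,
bottom) labels (x, b, c), (a, y, c), (a, b, z) is not a valid generalized
triangular puzzle piece.
-/

/-- Generalized labels (Knutson's labels): trees whose leaves are natural
numbers; `pair b a` represents the composed label `(b, a)`. -/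
inductive GLabel where
  | nat : ℕ → GLabel
  | pair : GLabel → GLabel → GLabel
deriving DecidableEq

/-- `min` of a generalized label: `min n = n`, `min (b,a) = min a`. -/
def GLabel.minL : GLabel → ℕ
  | .nat n => n
  | .pair _ a => a.minL

/-- `max` of a generalized label: `max n = n`, `max (b,a) = max b`. -/
def GLabel.maxL : GLabel → ℕ
  | .nat n => n
  | .pair b _ => b.maxL

/-- The actual generalized labels: every natural number is a label, and
`(b, a)` is a label whenever `a`, `b` are labels with `max a < min b`. -/
inductive GLabel.IsLabel : GLabel → Prop
  | nat (n : ℕ) : IsLabel (.nat n)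
  | pair {a b : GLabel} : IsLabel a → IsLabel b → a.maxL < b.minL →
      IsLabel (.pair b a)

/-- A valid generalized triangular puzzle piece: an upward unit triangle
with (left, right, bottom) labels either `(x, x, x)` with `x ∈ ℕ`, or
`(a, b, (b,a))` where `(b,a)` is a generalized label. -/
def ValidGPiece (l r b : GLabel) : Prop :=
  (∃ x : ℕ, l = .nat x ∧ r = .nat x ∧ b = .nat x) ∨
  (b = .pair r l ∧ GLabel.IsLabel (.pair r l))

theorem one_of_three_invalid (a b c x y z : GLabel)
    (ha : a.IsLabel) (hb : b.IsLabel) (hc : c.IsLabel)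
    (hx : x.IsLabel) (hy : y.IsLabel) (hz : z.IsLabel)
    (hax : a ≠ x) (hby : b ≠ y) (hcz : c ≠ z) :
    ¬ (ValidGPiece x b c ∧ ValidGPiece a y c ∧ ValidGPiece a b z) := by
  rintro ⟨h1, h2, -⟩
  rcases h1 with ⟨n, hxn, hbn, hcn⟩ | ⟨hc1, -⟩ <;>
    rcases h2 with ⟨m, ham, hym, hcm⟩ | ⟨hc2, -⟩
  · apply hax
    rw [hxn, ham]
    rw [hcn] at hcm
    injection hcm with h
    rw [h]
  · rw [hcn] at hc2; exact GLabel.noConfusion hc2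
  · rw [hcm] at hc1; exact GLabel.noConfusion hc1
  · rw [hc1] at hc2
    injection hc2 with h _
    exact hby h
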